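/- Let q = 2^m with m ≥ 4 even. Then S(1,1) = Σ_{x ∈ GF(q)} (-1)^{Tr(x^3 + x)} equals 0 if m ≡ 2 (mod 4), and equals -(-1)^{m/4} · 2^{m/2 + 1} if m ≡ 0 (mod 4). -/

import Mathlib

set_option linter.unusedSectionVars false

open Finset Polynomial

section Helpers

variable {F : Type} [Field F] [Fintype F]

lemma card_le_natDegree_of_roots {p : F[X]} (hp : p ≠ 0) {s : Finset F}
    (h : ∀ x ∈ s, p.eval x = 0) : s.card ≤ p.natDegree := by
  classical
  have hsub : s ⊆ p.roots.toFinset := by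
    intro x hx
    simp [Multiset.mem_toFinset, mem_roots, hp, h x hx, IsRoot]
  calc s.card ≤ p.roots.toFinset.card := Finset.card_le_card hsub
    _ ≤ Multiset.card p.roots := Multiset.toFinset_card_le _
    _ ≤ p.natDegree := Polynomial.card_roots' p

lemma XpowsubX_ne (N : ℕ) (hN : 2 ≤ N) : (X ^ N - X : F[X]) ≠ 0 := by
  intro h
  have := congrArg (fun q => Polynomial.coeff q N) h
  simp only [Polynomial.coeff_sub, Polynomial.coeff_X_pow, Polynomial.coeff_X,
    Polynomial.coeff_zero, if_pos rfl, if_neg (by omega : ¬ (1:ℕ) = N)] at this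
  simp at this

lemma XpowsubX_natDegree (N : ℕ) (hN : 2 ≤ N) : (X ^ N - X : F[X]).natDegree = N := by
  rw [Polynomial.natDegree_sub_eq_left_of_natDegree_lt] <;>
    simp [Polynomial.natDegree_X_pow] <;> omega

variable [CharP F 2]

lemma pow_pow_two (x : F) (a b : ℕ) : (x ^ 2 ^ a) ^ 2 ^ b = x ^ 2 ^ (a + b) := by
  rw [← pow_mul, ← pow_add]

lemma add_pow_two_pow (x y : F) (i : ℕ) : (x + y) ^ 2 ^ i = x ^ 2 ^ i + y ^ 2 ^ i :=
  add_pow_char_pow x y 2 i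

/-- partial trace sum -/
noncomputable def trs (n : ℕ) (x : F) : F := ∑ i ∈ range n, x ^ 2 ^ i

lemma trs_add (n : ℕ) (x y : F) : trs n (x + y) = trs n x + trs n y := by
  simp [trs, add_pow_two_pow, Finset.sum_add_distrib]

lemma trs_sq (n : ℕ) (x : F) : (trs n x) ^ 2 = trs n x + x ^ 2 ^ n + x := by
  have h : (trs n x) ^ 2 = ∑ i ∈ range n, x ^ 2 ^ (i+1) := by
    rw [trs, sum_pow_char]
    exact Finset.sum_congr rfl fun i _ => by rw [← pow_pow_two x i 1]; ring_nf
  rw [h]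
  have h2 : ∑ i ∈ range n, x ^ 2 ^ (i+1) = ∑ i ∈ range (n+1), x ^ 2 ^ i - x := by
    rw [Finset.sum_range_succ' (fun i => x ^ 2 ^ i) n]
    simp
  rw [h2, Finset.sum_range_succ, trs, CharTwo.sub_eq_add]

/-- values of trs on "subfield" elements are 0 or 1 -/
lemma trs_mem01 (n : ℕ) {x : F} (hx : x ^ 2 ^ n = x) : trs n x = 0 ∨ trs n x = 1 := by
  have h := trs_sq n x
  rw [hx] at h
  rw [add_assoc, CharTwo.add_self_eq_zero, add_zero] at h
  have : trs n x * (trs n x - 1) = 0 := by rw [mul_sub, mul_one, ← sq, h, sub_self]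
  rcases mul_eq_zero.1 this with h' | h'
  · exact Or.inl h'
  · exact Or.inr (sub_eq_zero.1 h')

end Helpers
section Counting

variable {F : Type} [Field F] [Fintype F] [CharP F 2] [DecidableEq F]
variable {m n : ℕ}

noncomputable def Kset (n : ℕ) (F : Type) [Field F] [Fintype F] [DecidableEq F] : Finset F :=
  univ.filter (fun x => x ^ 2 ^ n = x)

lemma mem_Kset {x : F} : x ∈ Kset n F ↔ x ^ 2 ^ n = x := by simp [Kset]

lemma pow_card_self (hcard : Fintype.card F = 2 ^ m) (x : F) : x ^ 2 ^ m = x := by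
  rw [← hcard]; exact FiniteField.pow_card x

lemma Kset_add {x y : F} (hx : x ∈ Kset n F) (hy : y ∈ Kset n F) : x + y ∈ Kset n F := by
  rw [mem_Kset] at *
  rw [add_pow_two_pow, hx, hy]

lemma Kset_mul {x y : F} (hx : x ∈ Kset n F) (hy : y ∈ Kset n F) : x * y ∈ Kset n F := by
  rw [mem_Kset] at *
  rw [mul_pow, hx, hy]

lemma Kset_one : (1 : F) ∈ Kset n F := by rw [mem_Kset]; simp

lemma Kset_zero : (0 : F) ∈ Kset n F := by
  rw [mem_Kset]; exact zero_pow (by positivity)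

lemma Kset_card_le (hn : 1 ≤ n) : (Kset n F).card ≤ 2 ^ n := by
  have h := card_le_natDegree_of_roots (p := (X ^ 2 ^ n - X : F[X]))
    (XpowsubX_ne _ (by have := Nat.one_lt_two_pow_iff.2 (by omega : n ≠ 0); omega))
    (s := Kset n F) (fun x hx => by
      rw [mem_Kset] at hx
      simp [hx])
  rwa [XpowsubX_natDegree _ (by have := Nat.one_lt_two_pow_iff.2 (by omega : n ≠ 0); omega)] at h

lemma psi_mem_Kset (hm : m = n + n) (hcard : Fintype.card F = 2 ^ m) (x : F) :
    x ^ 2 ^ n + x ∈ Kset n F := by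
  rw [mem_Kset, add_pow_two_pow, pow_pow_two, ← hm, pow_card_self hcard, add_comm]

lemma Kset_count (hm : m = n + n) (hn : 1 ≤ n) (hcard : Fintype.card F = 2 ^ m) :
    (Kset n F).card = 2 ^ n ∧ ∃ z₀ : F, z₀ ^ 2 ^ n = z₀ + 1 := by
  classical
  set ψ : F → F := fun x => x ^ 2 ^ n + x with hψ
  have hψadd : ∀ x y, ψ (x + y) = ψ x + ψ y := by
    intro x y; simp only [hψ, add_pow_two_pow]; ring
  have hψK : ∀ x, ψ x ∈ Kset n F := fun x => psi_mem_Kset hm hcard x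
  have hker : ∀ k, ψ k = 0 ↔ k ∈ Kset n F := by
    intro k
    rw [mem_Kset, hψ]
    constructor
    · intro h
      have h2 : k ^ 2 ^ n + k + k = 0 + k := by
        simp only [hψ] at h; rw [h]
      rwa [add_assoc, CharTwo.add_self_eq_zero, add_zero, zero_add] at h2
    · intro h; show k ^ 2 ^ n + k = 0; rw [h, CharTwo.add_self_eq_zero]
  set I : Finset F := univ.image ψ with hI
  have hIK : I ⊆ Kset n F := by
    intro c hc
    rw [hI, Finset.mem_image] at hc
    obtain ⟨x, _, rfl⟩ := hc
    exact hψK x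
  have hfiber : ∀ c ∈ I, (univ.filter (fun x => ψ x = c)).card = (Kset n F).card := by
    intro c hc
    rw [hI, Finset.mem_image] at hc
    obtain ⟨x₀, _, hx₀⟩ := hc
    apply Finset.card_bij (fun x _ => x + x₀)
    · intro a ha
      rw [Finset.mem_filter] at ha
      rw [← hker]
      rw [hψadd, ha.2, hx₀, CharTwo.add_self_eq_zero]
    · intro a ha b hb hab
      simpa using congrArg (· + x₀) hab
    · intro k hk
      refine ⟨k + x₀, ?_, by rw [add_assoc, CharTwo.add_self_eq_zero, add_zero]⟩
      rw [Finset.mem_filter]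
      exact ⟨Finset.mem_univ _, by rw [hψadd, (hker _).2 hk, hx₀, zero_add]⟩
  have hcount : 2 ^ m = I.card * (Kset n F).card := by
    have := Finset.card_eq_sum_card_fiberwise (f := ψ) (s := univ) (t := I)
      (fun x _ => Finset.mem_image_of_mem ψ (Finset.mem_univ x))
    rw [← hcard]
    rw [Finset.card_univ] at this
    rw [this, Finset.sum_congr rfl hfiber, Finset.sum_const, smul_eq_mul]
  have hKle := Kset_card_le (F := F) hn
  have hIle : I.card ≤ (Kset n F).card := Finset.card_le_card hIK
  have hKeq : (Kset n F).card = 2 ^ n := by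
    have h1 : 2 ^ n * 2 ^ n = 2 ^ m := by rw [hm, pow_add]
    nlinarith [hcount, hKle, hIle]
  have hIeq : I = Kset n F := by
    apply Finset.eq_of_subset_of_card_le hIK
    have h1 : 2 ^ n * 2 ^ n = 2 ^ m := by rw [hm, pow_add]
    nlinarith [hcount, hKle, hIle, hKeq]
  refine ⟨hKeq, ?_⟩
  have h1 : (1 : F) ∈ I := by rw [hIeq]; exact Kset_one
  rw [hI, Finset.mem_image] at h1
  obtain ⟨z₀, _, hz₀⟩ := h1
  refine ⟨z₀, ?_⟩
  have : z₀ ^ 2 ^ n + z₀ + z₀ = 1 + z₀ := by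
    have : ψ z₀ + z₀ = 1 + z₀ := by rw [hz₀]
    simpa [hψ] using this
  rw [add_assoc, CharTwo.add_self_eq_zero, add_zero, add_comm] at this
  exact this

end Counting
section CharSum

variable {F : Type} [Field F] [Fintype F] [CharP F 2] [DecidableEq F]
variable {m n : ℕ}

lemma trs_zero (n : ℕ) : trs n (0 : F) = 0 := by
  exact Finset.sum_eq_zero fun i _ => zero_pow (by positivity)

lemma exists_trs_one (hm : m = n + n) (hn : 1 ≤ n) (hcard : Fintype.card F = 2 ^ m) :
    ∃ k ∈ Kset n F, trs n k = 1 := by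
  classical
  by_contra hcon
  push_neg at hcon
  have hall : ∀ k ∈ Kset n F, trs n k = 0 := by
    intro k hk
    rcases trs_mem01 n (mem_Kset.1 hk) with h | h
    · exact h
    · exact absurd h (hcon k hk)
  set q : Polynomial F := ∑ i ∈ range n, Polynomial.X ^ 2 ^ i with hq
  have heval : ∀ x : F, q.eval x = trs n x := by
    intro x; simp [hq, trs, Polynomial.eval_finset_sum]
  have hqne : q ≠ 0 := by
    intro h
    have := congrArg (fun p => Polynomial.coeff p (2 ^ (n - 1))) h
    simp only [hq, Polynomial.finset_sum_coeff, Polynomial.coeff_X_pow,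
      Polynomial.coeff_zero] at this
    rw [Finset.sum_eq_single (n - 1)] at this
    · simp at this
    · intro i hi hine
      rw [if_neg]
      intro heq
      exact hine (Nat.pow_right_injective (by norm_num) heq.symm)
    · intro h; exact absurd (Finset.mem_range.2 (by omega)) h
  have hdeg : q.natDegree ≤ 2 ^ (n - 1) := by
    apply Polynomial.natDegree_sum_le_of_forall_le
    intro i hi
    rw [Polynomial.natDegree_X_pow]
    exact Nat.pow_le_pow_right (by norm_num) (by have := Finset.mem_range.1 hi; omega)
  have hle := card_le_natDegree_of_roots hqne (s := Kset n F)
    (fun x hx => by rw [heval]; exact hall x hx)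
  rw [(Kset_count hm hn hcard).1] at hle
  have : (2:ℕ) ^ n ≤ 2 ^ (n-1) := le_trans hle hdeg
  have h2 : (2:ℕ) ^ (n-1) < 2 ^ n := Nat.pow_lt_pow_right (by norm_num) (by omega)
  omega

noncomputable def eF (v : F) : ℤ := if v = 0 then 1 else -1

lemma eF_add {a b : F} (ha : a = 0 ∨ a = 1) (hb : b = 0 ∨ b = 1) :
    eF (a + b) = eF a * eF b := by
  have h2 : (1 : F) + 1 = 0 := CharTwo.add_self_eq_zero 1
  rcases ha with rfl | rfl <;> rcases hb with rfl | rfl <;>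
    simp [eF, h2, one_ne_zero]

lemma charSum (hm : m = n + n) (hn : 1 ≤ n) (hcard : Fintype.card F = 2 ^ m)
    {b : F} (hb : b ∈ Kset n F) :
    ∑ k ∈ Kset n F, eF (trs n (b * k)) = if b = 0 then (2 ^ n : ℤ) else 0 := by
  classical
  by_cases hb0 : b = 0
  · subst hb0
    rw [if_pos rfl]
    have : ∀ k ∈ Kset n F, eF (trs n ((0:F) * k)) = 1 := by
      intro k _; rw [zero_mul, trs_zero, eF, if_pos rfl]
    rw [Finset.sum_congr rfl this, Finset.sum_const, (Kset_count hm hn hcard).1]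
    simp
  · rw [if_neg hb0]
    obtain ⟨k₁, hk₁K, hk₁⟩ := exists_trs_one hm hn hcard
    set k₀ : F := b⁻¹ * k₁ with hk₀
    have hk₀K : k₀ ∈ Kset n F := by
      rw [mem_Kset, hk₀, mul_pow, inv_pow, mem_Kset.1 hk₁K, mem_Kset.1 hb]
    have hbk₀ : b * k₀ = k₁ := by
      rw [hk₀, ← mul_assoc, mul_inv_cancel₀ hb0, one_mul]
    have key : ∑ k ∈ Kset n F, eF (trs n (b * k))
        = ∑ k ∈ Kset n F, eF (trs n (b * (k + k₀))) := by
      apply Finset.sum_nbij' (fun k => k + k₀) (fun k => k + k₀)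
      · intro a ha; exact Kset_add ha hk₀K
      · intro a ha; exact Kset_add ha hk₀K
      · intro a _; rw [add_assoc, CharTwo.add_self_eq_zero, add_zero]
      · intro a _; rw [add_assoc, CharTwo.add_self_eq_zero, add_zero]
      · intro a ha
        congr 2
        rw [mul_add, mul_add, add_assoc, CharTwo.add_self_eq_zero, add_zero]
    have hpt : ∀ k ∈ Kset n F, eF (trs n (b * (k + k₀))) = - eF (trs n (b * k)) := by
      intro k hk
      have hbk : b * k ∈ Kset n F := Kset_mul hb hk
      have h01 := trs_mem01 n (mem_Kset.1 hbk)
      rw [mul_add, trs_add, hbk₀, hk₁]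
      rcases h01 with h | h <;> simp [h, eF, one_ne_zero, CharTwo.add_self_eq_zero]
    rw [Finset.sum_congr rfl hpt] at key
    rw [Finset.sum_neg_distrib] at key
    omega

end CharSum
section Main

variable {F : Type} [Field F] [Fintype F] [CharP F 2] [DecidableEq F]
variable {m n : ℕ}

lemma Kset_pow {x : F} (hx : x ∈ Kset n F) (j : ℕ) : x ^ j ∈ Kset n F := by
  rw [mem_Kset] at *
  rw [← pow_mul, mul_comm, pow_mul, hx]

lemma trs_split (hm : m = n + n) (y : F) : trs m y = trs n (y + y ^ 2 ^ n) := by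
  rw [trs_add, hm, trs, trs, trs, Finset.sum_range_add]
  congr 1
  exact Finset.sum_congr rfl fun i _ => by rw [pow_pow_two, add_comm]

lemma trs_sq' {y : F} (hy : y ^ 2 ^ n = y) : trs n (y ^ 2) = trs n y := by
  have h1 : trs n (y ^ 2) = (trs n y) ^ 2 := by
    rw [trs, trs, sum_pow_char]
    exact Finset.sum_congr rfl fun i _ => by
      rw [← pow_mul, ← pow_mul, mul_comm]
  rw [h1, trs_sq, hy, add_assoc, CharTwo.add_self_eq_zero, add_zero]

lemma trs_tele {z₀ : F} (hz₀ : z₀ ^ 2 ^ n = z₀ + 1) (hn : 1 ≤ n) :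
    trs n (z₀ ^ 2 + z₀) = 1 := by
  have : ∀ i, (z₀ ^ 2 + z₀) ^ 2 ^ i = z₀ ^ 2 ^ (i+1) - z₀ ^ 2 ^ i := by
    intro i
    rw [CharTwo.sub_eq_add, add_pow_two_pow, ← pow_mul, pow_succ, mul_comm ((2:ℕ)^i) 2]
  rw [trs, Finset.sum_congr rfl fun i _ => this i, Finset.sum_range_sub (fun i => z₀ ^ 2 ^ i),
    hz₀]
  norm_num

noncomputable def Zset (n : ℕ) (F : Type) [Field F] [Fintype F] [DecidableEq F] : Finset F :=
  univ.filter (fun z => z ^ 2 ^ n = z + 1)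

lemma mem_Zset {z : F} : z ∈ Zset n F ↔ z ^ 2 ^ n = z + 1 := by simp [Zset]

lemma innerZsum (hm : m = n + n) (hn : 1 ≤ n) (hcard : Fintype.card F = 2 ^ m)
    {z₀ : F} (hz₀ : z₀ ^ 2 ^ n = z₀ + 1)
    {T : F} (hT : T ∈ Kset n F) (hT0 : T ≠ 0) :
    ∑ z ∈ Zset n F, eF (trs m ((T * z) ^ 3 + T * z))
      = if T ^ 3 = 1 then -(2 ^ n : ℤ) * eF (trs n (1 + T)) else 0 := by
  classical
  have h2F : (2 : F) = 0 := CharTwo.two_eq_zero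
  have hTK := mem_Kset.1 hT
  -- step 1: pointwise rewriting of the trace argument
  have hpt : ∀ z ∈ Zset n F,
      trs m ((T * z) ^ 3 + T * z) = trs n (T ^ 3 * (z ^ 2 + z + 1) + T) := by
    intro z hz
    have hzZ := mem_Zset.1 hz
    rw [trs_split hm]
    congr 1
    have hfz : (T * z) ^ 2 ^ n = T * (z + 1) := by rw [mul_pow, hTK, hzZ]
    have hy : ((T * z) ^ 3 + T * z) ^ 2 ^ n = (T * (z + 1)) ^ 3 + T * (z + 1) := by
      rw [add_pow_two_pow, ← pow_mul, mul_comm 3, pow_mul, hfz]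
    rw [hy]
    linear_combination (T^3 * (z^3 + z^2 + z) + T * z) * h2F
  rw [Finset.sum_congr rfl fun z hz => by rw [hpt z hz]]
  -- step 2: reindex z = z₀ + k, k ∈ K
  have hre : ∑ z ∈ Zset n F, eF (trs n (T ^ 3 * (z ^ 2 + z + 1) + T))
      = ∑ k ∈ Kset n F, eF (trs n (T ^ 3 * ((z₀ + k) ^ 2 + (z₀ + k) + 1) + T)) := by
    apply Finset.sum_nbij' (fun z => z + z₀) (fun k => z₀ + k)
    · intro z hz
      rw [mem_Kset, add_pow_two_pow, mem_Zset.1 hz, hz₀]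
      linear_combination h2F
    · intro k hk
      rw [mem_Zset, add_pow_two_pow, hz₀, mem_Kset.1 hk]
      ring
    · intro z _; linear_combination z₀ * h2F
    · intro k _; linear_combination z₀ * h2F
    · intro z hz
      have hzz : z₀ + (z + z₀) = z := by linear_combination z₀ * h2F
      rw [hzz]
  rw [hre]
  -- step 3: split the argument
  set c : F := T ^ 3 with hc
  set d : F := c * (z₀ ^ 2 + z₀ + 1) + T with hd
  have hcK : c ∈ Kset n F := Kset_pow hT 3
  have hM₀K : z₀ ^ 2 + z₀ ∈ Kset n F := by
    rw [mem_Kset, add_pow_two_pow, ← pow_mul, mul_comm 2 (2^n), pow_mul, hz₀]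
    linear_combination (z₀ + 1) * h2F
  have hdK : d ∈ Kset n F := by
    rw [hd]
    exact Kset_add (Kset_mul hcK (Kset_add hM₀K Kset_one)) hT
  have harg : ∀ k, c * ((z₀ + k) ^ 2 + (z₀ + k) + 1) + T = (c * k ^ 2 + c * k) + d := by
    intro k
    rw [hd]
    linear_combination (c * z₀ * k) * h2F
  rw [Finset.sum_congr rfl fun k _ => by rw [harg k]]
  -- step 4: linearize  c k² + c k = (c' + c) k  inside trs
  set c' : F := c ^ 2 ^ (n-1) with hc'
  have hc'K : c' ∈ Kset n F := Kset_pow hcK _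
  have hc'sq : c' ^ 2 = c := by
    rw [hc', ← pow_mul, ← pow_succ, (by omega : n - 1 + 1 = n), mem_Kset.1 hcK]
  have hlin : ∀ k ∈ Kset n F, trs n (c * k ^ 2 + c * k) = trs n ((c' + c) * k) := by
    intro k hk
    have h1 : c * k ^ 2 = (c' * k) ^ 2 := by rw [mul_pow, hc'sq]
    rw [trs_add, h1, trs_sq' (mem_Kset.1 (Kset_mul hc'K hk)), ← trs_add, add_mul]
  rw [Finset.sum_congr rfl fun k hk => by rw [trs_add, hlin k hk]]
  -- step 5: pull out the constant eF (trs n d)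
  have hdd := trs_mem01 n (mem_Kset.1 hdK)
  have hsplit : ∀ k ∈ Kset n F,
      eF (trs n ((c' + c) * k) + trs n d) = eF (trs n ((c' + c) * k)) * eF (trs n d) := by
    intro k hk
    exact eF_add (trs_mem01 n (mem_Kset.1 (Kset_mul (Kset_add hc'K hcK) hk))) hdd
  rw [Finset.sum_congr rfl hsplit, ← Finset.sum_mul,
    charSum hm hn hcard (Kset_add hc'K hcK)]
  -- step 6: the condition c' + c = 0 ↔ T³ = 1
  have hcond : c' + c = 0 ↔ T ^ 3 = 1 := by
    constructor
    · intro h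
      have hcc : c' = c := by
        have := congrArg (· + c) h
        simpa [add_assoc, CharTwo.add_self_eq_zero] using this
      have hsq : c ^ 2 = c := by nth_rewrite 1 [← hcc]; exact hc'sq
      have hc0 : c ≠ 0 := by rw [hc]; exact pow_ne_zero 3 hT0
      have hcc1 : c * c = c * 1 := by rw [mul_one, ← pow_two]; exact hsq
      have hc1 : c = 1 := mul_left_cancel₀ hc0 hcc1
      rw [hc] at hc1; exact hc1
    · intro h
      rw [hc', hc, h, one_pow, CharTwo.add_self_eq_zero]
  by_cases hT3 : T ^ 3 = 1
  · rw [if_pos (hcond.2 hT3), if_pos hT3]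
    -- compute eF (trs n d)
    have hdval : trs n d = 1 + trs n (1 + T) := by
      have : d = (z₀ ^ 2 + z₀) + (1 + T) := by
        rw [hd, hc, hT3]
        ring
      rw [this, trs_add, trs_tele hz₀ hn]
    have h1T := trs_mem01 n (mem_Kset.1 (Kset_add Kset_one hT))
    have : eF (trs n d) = - eF (trs n (1 + T)) := by
      rw [hdval]
      rcases h1T with h | h <;>
        simp [h, eF, one_ne_zero, CharTwo.add_self_eq_zero]
    rw [this]
    ring
  · rw [if_neg (fun h => hT3 (hcond.1 h)), if_neg hT3, zero_mul]

end Main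
section MainIdentity

variable {F : Type} [Field F] [Fintype F] [CharP F 2] [DecidableEq F]
variable {m n : ℕ}

lemma main_identity (hm : m = n + n) (hn : 1 ≤ n) (hcard : Fintype.card F = 2 ^ m) :
    ∑ x : F, eF (trs m (x ^ 3 + x))
      = 2 ^ n - 2 ^ n *
        ∑ T ∈ ((Kset n F).erase 0).filter (fun T => T ^ 3 = 1), eF (trs n (1 + T)) := by
  classical
  have h2F : (2 : F) = 0 := CharTwo.two_eq_zero
  obtain ⟨hcardK, z₀, hz₀⟩ := Kset_count hm hn hcard
  have hsplit := Finset.sum_add_sum_compl (Kset n F) (fun x => eF (trs m (x ^ 3 + x)))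
  rw [← hsplit]
  -- part A
  have hA : ∑ x ∈ Kset n F, eF (trs m (x ^ 3 + x)) = (2 ^ n : ℤ) := by
    have : ∀ x ∈ Kset n F, eF (trs m (x ^ 3 + x)) = 1 := by
      intro x hx
      have hxK : x ^ 3 + x ∈ Kset n F := Kset_add (Kset_pow hx 3) hx
      have : trs m (x ^ 3 + x) = 0 := by
        rw [trs_split hm, mem_Kset.1 hxK, CharTwo.add_self_eq_zero, trs_zero]
      rw [this, eF, if_pos rfl]
    rw [Finset.sum_congr rfl this, Finset.sum_const, hcardK]
    simp
  -- part B
  have hB : ∑ x ∈ (Kset n F)ᶜ, eF (trs m (x ^ 3 + x))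
      = ∑ p ∈ ((Kset n F).erase 0) ×ˢ (Zset n F),
          eF (trs m ((p.1 * p.2) ^ 3 + p.1 * p.2)) := by
    apply Finset.sum_nbij' (fun x => (x + x ^ 2 ^ n, (x + x ^ 2 ^ n)⁻¹ * x))
      (fun p => p.1 * p.2)
    · intro x hx
      have hne : x ^ 2 ^ n ≠ x := fun h => by
        rw [Finset.mem_compl, mem_Kset] at hx; exact hx h
      have hT0 : x + x ^ 2 ^ n ≠ 0 := by
        intro h
        exact hne (by linear_combination h - x * h2F)
      have hTK : x + x ^ 2 ^ n ∈ Kset n F := by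
        have := psi_mem_Kset hm hcard x
        rwa [add_comm] at this
      rw [Finset.mem_product]
      constructor
      · exact Finset.mem_erase.2 ⟨hT0, hTK⟩
      · rw [mem_Zset, mul_pow, inv_pow, mem_Kset.1 hTK]
        apply mul_left_cancel₀ hT0
        rw [mul_inv_cancel_left₀ hT0, mul_add, mul_inv_cancel_left₀ hT0, mul_one]
        linear_combination -x * h2F
    · intro p hp
      rw [Finset.mem_product] at hp
      obtain ⟨hT, hz⟩ := hp
      have hT0 := (Finset.mem_erase.1 hT).1
      have hTK := mem_Kset.1 (Finset.mem_erase.1 hT).2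
      have hzZ := mem_Zset.1 hz
      rw [Finset.mem_compl, mem_Kset]
      intro h
      rw [mul_pow, hTK, hzZ] at h
      have : p.1 * (p.2 + 1) + p.1 * p.2 = p.1 * p.2 + p.1 * p.2 := by rw [h]
      rw [CharTwo.add_self_eq_zero] at this
      exact hT0 (by linear_combination this - p.2 * p.1 * h2F)
    · intro x hx
      have hne : x ^ 2 ^ n ≠ x := fun h => by
        rw [Finset.mem_compl, mem_Kset] at hx; exact hx h
      have hT0 : x + x ^ 2 ^ n ≠ 0 := fun h => hne (by linear_combination h - x * h2F)
      exact mul_inv_cancel_left₀ hT0 x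
    · intro p hp
      rw [Finset.mem_product] at hp
      obtain ⟨hT, hz⟩ := hp
      have hT0 := (Finset.mem_erase.1 hT).1
      have hTK := mem_Kset.1 (Finset.mem_erase.1 hT).2
      have hzZ := mem_Zset.1 hz
      have h1 : p.1 * p.2 + (p.1 * p.2) ^ 2 ^ n = p.1 := by
        rw [mul_pow, hTK, hzZ]
        linear_combination p.1 * p.2 * h2F
      ext
      · exact h1
      · simp only [h1]
        rw [inv_mul_cancel_left₀ hT0]
    · intro x hx
      have hne : x ^ 2 ^ n ≠ x := fun h => by
        rw [Finset.mem_compl, mem_Kset] at hx; exact hx h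
      have hT0 : x + x ^ 2 ^ n ≠ 0 := fun h => hne (by linear_combination h - x * h2F)
      rw [mul_inv_cancel_left₀ hT0 x]
  rw [hA, hB, Finset.sum_product]
  have hin : ∀ T ∈ (Kset n F).erase 0,
      ∑ z ∈ Zset n F, eF (trs m ((T * z) ^ 3 + T * z))
        = if T ^ 3 = 1 then -(2 ^ n : ℤ) * eF (trs n (1 + T)) else 0 := by
    intro T hT
    exact innerZsum hm hn hcard hz₀ (Finset.mem_erase.1 hT).2 (Finset.mem_erase.1 hT).1
  rw [Finset.sum_congr rfl hin, ← Finset.sum_filter]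
  simp only [neg_mul]
  rw [Finset.sum_neg_distrib, Finset.mul_sum]
  ring

end MainIdentity
section Cases

variable {F : Type} [Field F] [Fintype F] [CharP F 2] [DecidableEq F]
variable {m n j : ℕ}

lemma pow_card_sub_one (hm : m = n + n) (hcard : Fintype.card F = 2 ^ m)
    {T : F} (hT : T ∈ Kset n F) (hT0 : T ≠ 0) : T ^ (2 ^ n - 1) = 1 := by
  have h1 : T ^ (2 ^ n - 1) * T = 1 * T := by
    rw [one_mul, ← pow_succ, (by have := Nat.one_le_two_pow (n := n); omega : 2 ^ n - 1 + 1 = 2 ^ n),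
      mem_Kset.1 hT]
  exact mul_right_cancel₀ hT0 h1

lemma filter_odd (hm : m = n + n) (hn : 1 ≤ n) (hcard : Fintype.card F = 2 ^ m)
    (hodd : Odd n) :
    ((Kset n F).erase 0).filter (fun T => T ^ 3 = 1) = {1} := by
  have h3 : ¬ (3 ∣ 2 ^ n - 1) := by
    obtain ⟨k, hk⟩ := hodd
    have h4 : 4 ^ k % 3 = 1 := by
      rw [Nat.pow_mod]
      norm_num
    have h2n : 2 ^ n = 2 * 4 ^ k := by
      rw [hk, pow_succ, pow_mul]
      ring
    omega
  ext T
  simp only [Finset.mem_filter, Finset.mem_erase, Finset.mem_singleton]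
  constructor
  · rintro ⟨⟨hT0, hTK⟩, hT3⟩
    have ho1 : orderOf T ∣ 3 := orderOf_dvd_of_pow_eq_one hT3
    have ho2 : orderOf T ∣ 2 ^ n - 1 :=
      orderOf_dvd_of_pow_eq_one (pow_card_sub_one hm hcard hTK hT0)
    have hco : Nat.Coprime 3 (2 ^ n - 1) := (Nat.Prime.coprime_iff_not_dvd (by norm_num)).2 h3
    have : orderOf T ∣ 1 := Nat.dvd_gcd ho1 ho2 |>.trans (dvd_of_eq hco)
    exact orderOf_eq_one_iff.1 (Nat.eq_one_of_dvd_one this ▸ rfl)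
  · rintro rfl
    exact ⟨⟨one_ne_zero, Kset_one⟩, one_pow 3⟩

lemma trs_one_val : trs n (1 : F) = (n : F) := by
  simp [trs]

lemma omega_pow_four {ω : F} (hω3 : ω ^ 3 = 1) (k : ℕ) : ω ^ 4 ^ k = ω := by
  induction k with
  | zero => simp
  | succ k ih =>
    rw [pow_succ, pow_mul, ih, (by norm_num : (4:ℕ) = 3 + 1), pow_add, hω3, one_mul, pow_one]

lemma trs_omega (hn : n = j + j) {ω : F} (hω3 : ω ^ 3 = 1) (hω : ω ^ 2 + ω + 1 = 0) :
    trs n ω = (j : F) := by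
  have h2F : (2 : F) = 0 := CharTwo.two_eq_zero
  subst hn
  induction j with
  | zero => simp [trs]
  | succ k ih =>
    have hstep : k + 1 + (k + 1) = (k + k) + 1 + 1 := by omega
    rw [hstep, trs, Finset.sum_range_succ, Finset.sum_range_succ, ← trs, ih]
    have h1 : ω ^ 2 ^ (k + k) = ω := by
      have he : (2:ℕ) ^ (k + k) = 4 ^ k := by
        rw [(by omega : k + k = 2 * k), pow_mul]; norm_num
      rw [he, omega_pow_four hω3]
    have h2 : ω ^ 2 ^ (k + k + 1) = ω ^ 2 := by
      rw [pow_succ, pow_mul, h1]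
    rw [h1, h2]
    push_cast
    linear_combination hω - h2F

end Cases
section CasesEven

variable {F : Type} [Field F] [Fintype F] [CharP F 2] [DecidableEq F]
variable {m n j : ℕ}

lemma exists_omega (hm : m = n + n) (hn : 1 ≤ n) (hcard : Fintype.card F = 2 ^ m) :
    ∃ ω : F, ω ^ 3 = 1 ∧ ω ^ 2 + ω + 1 = 0 ∧ ω ≠ 1 ∧ ω ≠ 0 := by
  have h2F : (2 : F) = 0 := CharTwo.two_eq_zero
  have hcardu : Nat.card Fˣ = 2 ^ m - 1 := by
    rw [Nat.card_eq_fintype_card, Fintype.card_units, hcard]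
  have h3 : 3 ∣ 2 ^ m - 1 := by
    have h4 : 4 ^ n % 3 = 1 := by rw [Nat.pow_mod]; norm_num
    have h2m : 2 ^ m = 4 ^ n := by
      rw [hm, (by omega : n + n = 2 * n), pow_mul]; norm_num
    omega
  obtain ⟨g, hg⟩ := IsCyclic.exists_ofOrder_eq_natCard (α := Fˣ)
  have hm4 : 4 ≤ 2 ^ m := by
    calc (4:ℕ) = 2 ^ 2 := by norm_num
    _ ≤ 2 ^ m := Nat.pow_le_pow_right (by norm_num) (by omega)
  obtain ⟨d, hd⟩ := h3
  have hd1 : 1 ≤ d := by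
    rcases Nat.eq_zero_or_pos d with h | h
    · omega
    · omega
  have hdlt : d < 2 ^ m - 1 := by omega
  set u : Fˣ := g ^ d with hu
  have hu3 : u ^ 3 = 1 := by
    rw [hu, ← pow_mul, mul_comm, ← hd, ← hcardu, ← hg]
    exact pow_orderOf_eq_one g
  have hu1 : u ≠ 1 := by
    intro h
    have := orderOf_dvd_of_pow_eq_one (h ▸ rfl : g ^ d = 1)
    rw [hg, hcardu] at this
    have := Nat.le_of_dvd (by omega) this
    omega
  refine ⟨(u : F), ?_, ?_, ?_, ?_⟩
  · rw [← Units.val_pow_eq_pow_val, hu3, Units.val_one]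
  · have hc : ((u : F)) ^ 3 = 1 := by rw [← Units.val_pow_eq_pow_val, hu3, Units.val_one]
    have hne : (u : F) - 1 ≠ 0 := by
      intro h
      apply hu1
      apply Units.ext
      rw [Units.val_one]
      exact sub_eq_zero.1 h
    have hfac : ((u : F) - 1) * ((u:F) ^ 2 + (u:F) + 1) = 0 := by linear_combination hc
    rcases mul_eq_zero.1 hfac with h | h
    · exact absurd h hne
    · exact h
  · intro h
    exact hu1 (Units.ext (by rw [Units.val_one, ← h]))
  · exact Units.ne_zero u

lemma omega_mem_Kset (hn : n = j + j) {ω : F} (hω3 : ω ^ 3 = 1) : ω ∈ Kset n F := by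
  rw [mem_Kset, hn, (by omega : j + j = 2 * j), pow_mul, (by norm_num : (2:ℕ)^2 = 4),
    omega_pow_four hω3]

lemma filter_even (hm : m = n + n) (hn : n = j + j) (hj : 1 ≤ j)
    (hcard : Fintype.card F = 2 ^ m)
    {ω : F} (hω3 : ω ^ 3 = 1) (hω : ω ^ 2 + ω + 1 = 0) (hω1 : ω ≠ 1) (hω0 : ω ≠ 0) :
    ((Kset n F).erase 0).filter (fun T => T ^ 3 = 1) = {1, ω, ω + 1} := by
  have h2F : (2 : F) = 0 := CharTwo.two_eq_zero
  have hωK : ω ∈ Kset n F := omega_mem_Kset hn hω3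
  have hω2 : ω + 1 = ω ^ 2 := by linear_combination -hω + (ω + 1) * h2F
  ext T
  simp only [Finset.mem_filter, Finset.mem_erase, Finset.mem_insert, Finset.mem_singleton]
  constructor
  · rintro ⟨⟨hT0, hTK⟩, hT3⟩
    have hfac : (T - 1) * (T - ω) * (T - (ω + 1)) = 0 := by
      linear_combination hT3 + (T - 1) * hω + (-(ω+1)*T^2 + ω*T + 1) * h2F
    rcases mul_eq_zero.1 hfac with h | h
    · rcases mul_eq_zero.1 h with h' | h'
      · exact Or.inl (sub_eq_zero.1 h')
      · exact Or.inr (Or.inl (sub_eq_zero.1 h'))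
    · exact Or.inr (Or.inr (sub_eq_zero.1 h))
  · intro h
    rcases h with rfl | rfl | rfl
    · exact ⟨⟨one_ne_zero, Kset_one⟩, one_pow 3⟩
    · exact ⟨⟨hω0, hωK⟩, hω3⟩
    · refine ⟨⟨?_, ?_⟩, ?_⟩
      · intro h
        exact hω1 (by linear_combination h - h2F)
      · rw [hω2]; exact Kset_pow hωK 2
      · rw [hω2, ← pow_mul]
        have h23 : ω ^ ((2:ℕ) * 3) = (ω ^ 3) ^ 2 := by rw [mul_comm, pow_mul]
        rw [h23, hω3, one_pow]

lemma sum_filter_even (hm : m = n + n) (hn : n = j + j) (hj : 1 ≤ j)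
    (hcard : Fintype.card F = 2 ^ m) :
    ∑ T ∈ ((Kset n F).erase 0).filter (fun T => T ^ 3 = 1), eF (trs n (1 + T))
      = 1 + 2 * (-1 : ℤ) ^ j := by
  have h2F : (2 : F) = 0 := CharTwo.two_eq_zero
  obtain ⟨ω, hω3, hω, hω1, hω0⟩ := exists_omega hm (by omega) hcard
  rw [filter_even hm hn hj hcard hω3 hω hω1 hω0]
  have hne1 : (1 : F) ∉ ({ω, ω + 1} : Finset F) := by
    simp only [Finset.mem_insert, Finset.mem_singleton]
    push_neg
    constructor
    · exact fun h => hω1 h.symm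
    · intro h
      exact hω0 (by linear_combination -h)
  have hne2 : ω ∉ ({ω + 1} : Finset F) := by
    simp only [Finset.mem_singleton]
    intro h
    have h01 : (0:F) = 1 := by linear_combination h
    simp at h01
  rw [Finset.sum_insert hne1, Finset.sum_insert hne2, Finset.sum_singleton]
  -- values
  have htrs1 : trs n ((1:F) + 1) = 0 := by
    rw [CharTwo.add_self_eq_zero, trs_zero]
  have htrsn : trs n (1:F) = 0 := by
    rw [trs_one_val, CharP.cast_eq_zero_iff F 2 n]
    omega
  have htrsω : trs n (1 + ω) = (j : F) := by
    rw [trs_add, htrsn, zero_add, trs_omega hn hω3 hω]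
  have htrsω2 : trs n (1 + (ω + 1)) = (j : F) := by
    have : (1:F) + (ω + 1) = ω := by linear_combination h2F
    rw [this, trs_omega hn hω3 hω]
  rw [htrs1, htrsω, htrsω2]
  have hj01 : eF ((j : F)) = (-1 : ℤ) ^ j := by
    rcases Nat.even_or_odd j with he | ho
    · rw [eF, if_pos, Even.neg_one_pow he]
      rw [CharP.cast_eq_zero_iff F 2 j]
      exact he.two_dvd
    · rw [eF, if_neg (fun h => (Nat.not_even_iff_odd.2 ho)
        (even_iff_two_dvd.2 ((CharP.cast_eq_zero_iff F 2 j).1 h))), Odd.neg_one_pow ho]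
  rw [hj01, eF, if_pos rfl]
  ring

end CasesEven
section Bridge

variable {F : Type} [Field F] [Fintype F] [Algebra (ZMod 2) F] [DecidableEq F]
variable {m : ℕ}

lemma bridge (hm1 : 1 ≤ m) (hcard : Fintype.card F = 2 ^ m) (x : F) :
    algebraMap (ZMod 2) F (Algebra.trace (ZMod 2) F x) = trs m x := by
  classical
  haveI hchar : CharP F 2 := charP_of_injective_algebraMap (algebraMap (ZMod 2) F).injective 2
  rw [trace_eq_sum_automorphisms]
  have hbij : Function.Bijective (frobenius F 2) :=
    (Finite.injective_iff_bijective).1 (frobenius_inj F 2)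
  let φr : F ≃+* F := RingEquiv.ofBijective (frobenius F 2) hbij
  have hz2 : ∀ r : ZMod 2, r = 0 ∨ r = 1 := by decide
  let φ : F ≃ₐ[ZMod 2] F :=
    { φr with
      commutes' := fun r => by
        rcases hz2 r with rfl | rfl <;> simp [φr] }
  have hφ : ∀ y : F, φ y = y ^ 2 := fun y => rfl
  have hφpow : ∀ (i : ℕ) (y : F), (φ ^ i) y = y ^ 2 ^ i := by
    intro i
    induction i with
    | zero => intro y; simp
    | succ i ih =>
      intro y
      rw [pow_succ, AlgEquiv.mul_apply, hφ, ih, ← pow_mul]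
      congr 1
      rw [pow_succ]
      ring
  have hfinrank : Module.finrank (ZMod 2) F = m := by
    have h := Module.card_eq_pow_finrank (K := ZMod 2) (V := F)
    rw [hcard, ZMod.card] at h
    exact (Nat.pow_right_injective (le_refl 2) h.symm)
  have hcardaut : Fintype.card (F ≃ₐ[ZMod 2] F) = m := by
    rw [← Nat.card_eq_fintype_card, IsGalois.card_aut_eq_finrank, hfinrank]
  have key : ∀ a b : ℕ, a < b → b < m → φ ^ a ≠ φ ^ b := by
    intro a b hab hbm heq
    have hall : ∀ y : F, y ^ 2 ^ (b - a) = y := by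
      intro y
      have h1 : (φ ^ a) (y ^ 2 ^ (b - a)) = (φ ^ a) y := by
        rw [hφpow, hφpow, pow_pow_two, (by omega : b - a + a = b), ← hφpow, ← heq, hφpow]
      exact (φ ^ a).injective h1
    have h2ba : 2 ≤ 2 ^ (b - a) := by
      calc (2:ℕ) = 2 ^ 1 := by norm_num
      _ ≤ 2 ^ (b - a) := Nat.pow_le_pow_right (by norm_num) (by omega)
    have hroots := card_le_natDegree_of_roots (XpowsubX_ne (2 ^ (b - a)) h2ba)
      (s := (Finset.univ : Finset F)) (fun y _ => by simp [hall y])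
    rw [XpowsubX_natDegree _ h2ba, Finset.card_univ, hcard] at hroots
    have := Nat.pow_lt_pow_right (by norm_num : 1 < 2) (by omega : b - a < m)
    omega
  have hEinj : Function.Injective (fun i : Fin m => φ ^ (i : ℕ)) := by
    intro i j hij
    rcases lt_trichotomy (i : ℕ) (j : ℕ) with h | h | h
    · exact absurd hij (key _ _ h j.isLt)
    · exact Fin.ext h
    · exact absurd hij.symm (key _ _ h i.isLt)
  have hEbij : Function.Bijective (fun i : Fin m => φ ^ (i : ℕ)) :=
    (Fintype.bijective_iff_injective_and_card _).2
      ⟨hEinj, by rw [Fintype.card_fin, hcardaut]⟩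
  have hsum := Fintype.sum_bijective (fun i : Fin m => φ ^ (i : ℕ)) hEbij
    (fun i : Fin m => x ^ 2 ^ (i : ℕ)) (fun σ => σ x) (fun i => (hφpow _ x).symm)
  rw [← hsum, Fin.sum_univ_eq_sum_range (fun i => x ^ 2 ^ i) m, trs]

lemma neg_one_pow_val (hm1 : 1 ≤ m) (hcard : Fintype.card F = 2 ^ m) (y : F) :
    (-1 : ℤ) ^ (Algebra.trace (ZMod 2) F y).val = eF (trs m y) := by
  classical
  have hinj := (algebraMap (ZMod 2) F).injective
  have hb := bridge hm1 hcard y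
  have hz2 : ∀ r : ZMod 2, r = 0 ∨ r = 1 := by decide
  rcases hz2 (Algebra.trace (ZMod 2) F y) with h | h
  · rw [h] at hb ⊢
    rw [map_zero] at hb
    simp only [eF]
    rw [if_pos hb.symm]
    rfl
  · rw [h] at hb ⊢
    rw [map_one] at hb
    simp only [eF]
    rw [if_neg (by rw [← hb]; exact one_ne_zero)]
    rfl

end Bridge
theorem stmt8 (m : ℕ) (hm : 4 ≤ m) (hme : Even m)
    (F : Type) [Field F] [Fintype F] [Algebra (ZMod 2) F]
    (hcard : Fintype.card F = 2 ^ m) :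
    (m % 4 = 2 →
      ∑ x : F, (-1 : ℤ) ^ (Algebra.trace (ZMod 2) F (x ^ 3 + x)).val = 0) ∧
    (m % 4 = 0 →
      ∑ x : F, (-1 : ℤ) ^ (Algebra.trace (ZMod 2) F (x ^ 3 + x)).val
        = -(-1 : ℤ) ^ (m / 4) * 2 ^ (m / 2 + 1)) := by
  classical
  haveI : CharP F 2 := charP_of_injective_algebraMap (algebraMap (ZMod 2) F).injective 2
  obtain ⟨k, hk⟩ := hme
  set n := m / 2 with hn
  have hmn : m = n + n := by omega
  have hrw : ∀ x : F, (-1:ℤ) ^ (Algebra.trace (ZMod 2) F (x ^ 3 + x)).val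
      = eF (trs m (x ^ 3 + x)) := fun x => neg_one_pow_val (by omega) hcard _
  have hmain := main_identity hmn (by omega) hcard
  constructor
  · intro h4
    have hodd : Odd n := by
      rw [Nat.odd_iff]; omega
    rw [Finset.sum_congr rfl (fun x _ => hrw x), hmain,
      filter_odd hmn (by omega) hcard hodd, Finset.sum_singleton]
    have h0 : trs n ((1:F) + 1) = 0 := by rw [CharTwo.add_self_eq_zero, trs_zero]
    rw [h0]
    simp [eF]
  · intro h4
    set j := m / 4 with hj
    have hnj : n = j + j := by omega
    rw [Finset.sum_congr rfl (fun x _ => hrw x), hmain,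
      sum_filter_even hmn hnj (by omega) hcard]
    ring
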